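/- For the hard cap model on a measurable set A ⊆ S_{d−1}, the expected code size satisfies α_A^θ(λ) = λ · F_A^θ(λ), where F_A^θ(λ) is the expected free area, i.e., the expected measure of the set of points y ∈ A with ⟨y, x⟩ ≤ cos θ for all x in the random configuration. -/

import Mathlib

open Real MeasureTheory

open scoped Classical in
/-- The canonical partition function `Ẑ_A^θ(k)` of the hard cap model. -/
noncomputable def hardCapZhat (d : ℕ) (μ : Measure (EuclideanSpace ℝ (Fin d)))
    (A : Set (EuclideanSpace ℝ (Fin d))) (θ : ℝ) (k : ℕ) : ℝ :=
  (1 / k.factorial : ℝ) *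
    ∫ x : Fin k → EuclideanSpace ℝ (Fin d),
      (if ∀ i j : Fin k, i < j → (inner ℝ (x i) (x j) : ℝ) ≤ Real.cos θ then (1 : ℝ) else 0)
      ∂(Measure.pi fun _ => μ.restrict A)

/-- The grand canonical partition function `Z_A^θ(λ)`. -/
noncomputable def hardCapZ (d : ℕ) (μ : Measure (EuclideanSpace ℝ (Fin d)))
    (A : Set (EuclideanSpace ℝ (Fin d))) (θ : ℝ) (lam : ℝ) : ℝ :=
  ∑' k : ℕ, lam ^ k * hardCapZhat d μ A θ k

/-- The expected code size `α_A^θ(λ) = λ Z′(λ)/Z(λ)`. -/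
noncomputable def hardCapAlpha (d : ℕ) (μ : Measure (EuclideanSpace ℝ (Fin d)))
    (A : Set (EuclideanSpace ℝ (Fin d))) (θ : ℝ) (lam : ℝ) : ℝ :=
  lam * deriv (hardCapZ d μ A θ) lam / hardCapZ d μ A θ lam

open scoped Classical in
/-- The expected free area `F_A^θ(λ)`: the expectation, over a configuration
`X_A` of the hard cap model, of the measure of the set of `y ∈ A` at angle at
least `θ` from every point of `X_A`. -/
noncomputable def hardCapFreeArea (d : ℕ) (μ : Measure (EuclideanSpace ℝ (Fin d)))
    (A : Set (EuclideanSpace ℝ (Fin d))) (θ : ℝ) (lam : ℝ) : ℝ :=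
  (1 / hardCapZ d μ A θ lam) *
    ∑' k : ℕ, lam ^ k * ((1 / k.factorial : ℝ) *
      ∫ x : Fin k → EuclideanSpace ℝ (Fin d),
        (if ∀ i j : Fin k, i < j → (inner ℝ (x i) (x j) : ℝ) ≤ Real.cos θ then
          ((μ.restrict A) {y | ∀ i : Fin k, (inner ℝ y (x i) : ℝ) ≤ Real.cos θ}).toReal
        else 0)
        ∂(Measure.pi fun _ => μ.restrict A))

section HardCapAux

/-- The pairwise-compatibility set is closed. -/
lemma hc_compat_closed (d k : ℕ) (c : ℝ) :
    IsClosed {x : Fin k → EuclideanSpace ℝ (Fin d) |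
      ∀ i j : Fin k, i < j → (inner ℝ (x i) (x j) : ℝ) ≤ c} := by
  have : {x : Fin k → EuclideanSpace ℝ (Fin d) |
      ∀ i j : Fin k, i < j → (inner ℝ (x i) (x j) : ℝ) ≤ c}
      = ⋂ (i : Fin k) (j : Fin k) (_ : i < j),
        {x | (inner ℝ (x i) (x j) : ℝ) ≤ c} := by
    ext x; simp [Set.mem_iInter]
  rw [this]
  exact isClosed_iInter fun i => isClosed_iInter fun j => isClosed_iInter fun _ =>
    isClosed_le (Continuous.inner (continuous_apply i) (continuous_apply j)) continuous_const

open scoped Classical in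
lemma hc_integral_compat {d : ℕ} (ν : Measure (EuclideanSpace ℝ (Fin d))) [IsFiniteMeasure ν]
    (c : ℝ) (k : ℕ) :
    ∫ x : Fin k → EuclideanSpace ℝ (Fin d),
      (if ∀ i j : Fin k, i < j → (inner ℝ (x i) (x j) : ℝ) ≤ c then (1 : ℝ) else 0)
      ∂(Measure.pi fun _ => ν)
    = ((Measure.pi fun _ : Fin k => ν)
        {x | ∀ i j : Fin k, i < j → (inner ℝ (x i) (x j) : ℝ) ≤ c}).toReal := by
  rw [show (fun x : Fin k → EuclideanSpace ℝ (Fin d) =>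
      if ∀ i j : Fin k, i < j → (inner ℝ (x i) (x j) : ℝ) ≤ c then (1 : ℝ) else 0)
      = Set.indicator {x : Fin k → EuclideanSpace ℝ (Fin d) |
          ∀ i j : Fin k, i < j → (inner ℝ (x i) (x j) : ℝ) ≤ c} (fun _ => (1:ℝ)) from
    funext fun x => by by_cases h : ∀ i j : Fin k, i < j → (inner ℝ (x i) (x j) : ℝ) ≤ c <;>
      simp [Set.indicator_apply, Set.mem_setOf_eq, h]]
  rw [integral_indicator (hc_compat_closed d k c).measurableSet, setIntegral_const]
  simp
  rfl

lemma hc_zhat_nonneg (d : ℕ) (μ : Measure (EuclideanSpace ℝ (Fin d))) [IsFiniteMeasure μ]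
    (A : Set (EuclideanSpace ℝ (Fin d))) (θ : ℝ) (k : ℕ) :
    0 ≤ hardCapZhat d μ A θ k := by
  rw [hardCapZhat, hc_integral_compat]
  positivity

lemma hc_zhat_le (d : ℕ) (μ : Measure (EuclideanSpace ℝ (Fin d))) [IsFiniteMeasure μ]
    (A : Set (EuclideanSpace ℝ (Fin d))) (θ : ℝ) (k : ℕ) :
    hardCapZhat d μ A θ k
      ≤ ((μ.restrict A) Set.univ).toReal ^ k / k.factorial := by
  rw [hardCapZhat, hc_integral_compat]
  set ν := μ.restrict A
  have h1 : (Measure.pi fun _ : Fin k => ν)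
      {x | ∀ i j : Fin k, i < j → (inner ℝ (x i) (x j) : ℝ) ≤ Real.cos θ}
      ≤ (ν Set.univ) ^ k := by
    calc _ ≤ (Measure.pi fun _ : Fin k => ν) Set.univ := measure_mono (Set.subset_univ _)
    _ = (ν Set.univ) ^ k := by
        rw [Measure.pi_univ]; simp [Finset.prod_const]
  have h2 : ((Measure.pi fun _ : Fin k => ν)
      {x | ∀ i j : Fin k, i < j → (inner ℝ (x i) (x j) : ℝ) ≤ Real.cos θ}).toReal
      ≤ ((ν Set.univ) ^ k).toReal := by
    refine ENNReal.toReal_mono ?_ h1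
    exact ENNReal.pow_ne_top (measure_ne_top ν _)
  rw [ENNReal.toReal_pow] at h2
  refine le_trans (mul_le_mul_of_nonneg_left h2 (by positivity)) (le_of_eq (by ring))

lemma hc_u_summable (R C : ℝ) :
    Summable (fun k : ℕ => (k : ℝ) * R ^ (k - 1) * (C ^ k / k.factorial)) := by
  rw [← summable_nat_add_iff 1]
  have : (fun n : ℕ => ((n + 1 : ℕ) : ℝ) * R ^ ((n + 1) - 1) * (C ^ (n + 1) / (n + 1).factorial))
      = fun n : ℕ => C * ((R * C) ^ n / n.factorial) := by
    funext n
    have hf : (((n + 1).factorial : ℕ) : ℝ) = ((n : ℝ) + 1) * (n.factorial : ℝ) := by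
      rw [Nat.factorial_succ]; push_cast; ring
    have hfn : ((n.factorial : ℕ) : ℝ) ≠ 0 := Nat.cast_ne_zero.2 n.factorial_ne_zero
    have hn1 : ((n : ℝ) + 1) ≠ 0 := by positivity
    rw [Nat.add_sub_cancel, hf]
    push_cast
    field_simp
    ring
  rw [this]
  exact (Real.summable_pow_div_factorial (R * C)).mul_left C

end HardCapAux

section HardCapDeriv

variable (d : ℕ) (μ : Measure (EuclideanSpace ℝ (Fin d))) [IsFiniteMeasure μ]
    (A : Set (EuclideanSpace ℝ (Fin d))) (θ : ℝ)

lemma hc_deriv_summable (lam : ℝ) :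
    Summable (fun k : ℕ => (k : ℝ) * lam ^ (k - 1) * hardCapZhat d μ A θ k) := by
  set C := ((μ.restrict A) Set.univ).toReal with hC
  set R := |lam| + 1 with hRdef
  have hR : 0 ≤ R := by positivity
  have hlamR : |lam| ≤ R := by rw [hRdef]; linarith
  refine Summable.of_norm_bounded (hc_u_summable R C) fun k => ?_
  have h1 : ‖(k : ℝ) * lam ^ (k - 1) * hardCapZhat d μ A θ k‖
      = (k : ℝ) * |lam| ^ (k - 1) * |hardCapZhat d μ A θ k| := by
    rw [norm_mul, norm_mul, norm_pow]
    simp [Nat.abs_cast]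
  rw [h1]
  have h2 : |hardCapZhat d μ A θ k| ≤ C ^ k / k.factorial := by
    rw [abs_of_nonneg (hc_zhat_nonneg d μ A θ k)]
    exact hc_zhat_le d μ A θ k
  gcongr

lemma hc_Z_summable (lam : ℝ) :
    Summable (fun k : ℕ => lam ^ k * hardCapZhat d μ A θ k) := by
  set C := ((μ.restrict A) Set.univ).toReal with hC
  refine Summable.of_norm_bounded (g := fun k => (|lam| * C) ^ k / k.factorial)
    (Real.summable_pow_div_factorial _) fun k => ?_
  rw [norm_mul, norm_pow]
  have h2 : ‖hardCapZhat d μ A θ k‖ ≤ C ^ k / k.factorial := by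
    rw [Real.norm_eq_abs, abs_of_nonneg (hc_zhat_nonneg d μ A θ k)]
    exact hc_zhat_le d μ A θ k
  calc ‖lam‖ ^ k * ‖hardCapZhat d μ A θ k‖ ≤ |lam| ^ k * (C ^ k / k.factorial) := by
        gcongr
        exact (Real.norm_eq_abs lam).le
  _ = (|lam| * C) ^ k / k.factorial := by rw [mul_pow]; ring

lemma hc_hasDerivAt (lam : ℝ) :
    HasDerivAt (hardCapZ d μ A θ)
      (∑' k : ℕ, (k : ℝ) * lam ^ (k - 1) * hardCapZhat d μ A θ k) lam := by
  set C := ((μ.restrict A) Set.univ).toReal with hC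
  have hC0 : 0 ≤ C := ENNReal.toReal_nonneg
  set R := |lam| + 1 with hRdef
  have hR : (0:ℝ) < R := by positivity
  show HasDerivAt (fun z => ∑' k : ℕ, z ^ k * hardCapZhat d μ A θ k) _ lam
  refine hasDerivAt_tsum_of_isPreconnected (𝕜 := ℝ) (F := ℝ)
    (g := fun k z => z ^ k * hardCapZhat d μ A θ k)
    (g' := fun k z => (k : ℝ) * z ^ (k - 1) * hardCapZhat d μ A θ k)
    (u := fun k : ℕ => (k : ℝ) * R ^ (k - 1) * (C ^ k / k.factorial)) (y₀ := lam)
    (hc_u_summable R C) (Metric.isOpen_ball (x := (0:ℝ)) (ε := R))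
    ((convex_ball (0:ℝ) R).isPreconnected) (fun n y _ => ?_) (fun n y hy => ?_)
    ?_ ?_ ?_
  · exact (hasDerivAt_pow n y).mul_const _
  · have hyR : |y| ≤ R := by
      rw [Metric.mem_ball, Real.dist_eq, sub_zero] at hy
      exact le_of_lt hy
    have h1 : ‖(n : ℝ) * y ^ (n - 1) * hardCapZhat d μ A θ n‖
        = (n : ℝ) * |y| ^ (n - 1) * |hardCapZhat d μ A θ n| := by
      rw [norm_mul, norm_mul, norm_pow]
      simp [Nat.abs_cast]
    rw [h1]
    have h2 : |hardCapZhat d μ A θ n| ≤ C ^ n / n.factorial := by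
      rw [abs_of_nonneg (hc_zhat_nonneg d μ A θ n)]
      exact hc_zhat_le d μ A θ n
    show (n : ℝ) * |y| ^ (n - 1) * |hardCapZhat d μ A θ n|
        ≤ (n : ℝ) * R ^ (n - 1) * (C ^ n / n.factorial)
    gcongr
  · rw [Metric.mem_ball, Real.dist_eq, sub_zero, hRdef]
    linarith
  · exact hc_Z_summable d μ A θ lam
  · rw [Metric.mem_ball, Real.dist_eq, sub_zero, hRdef]
    linarith

end HardCapDeriv

lemma hc_snoc_cond {E : Type*} [NormedAddCommGroup E] [InnerProductSpace ℝ E]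
    {k : ℕ} (c : ℝ) (x : Fin k → E) (y : E) :
    (∀ i j : Fin (k+1), i < j →
        (inner ℝ ((Fin.snoc x y : Fin (k+1) → E) i) ((Fin.snoc x y : Fin (k+1) → E) j) : ℝ) ≤ c)
    ↔ ((∀ i j : Fin k, i < j → (inner ℝ (x i) (x j) : ℝ) ≤ c)
        ∧ ∀ i : Fin k, (inner ℝ (x i) y : ℝ) ≤ c) := by
  constructor
  · intro h
    refine ⟨fun i j hij => ?_, fun i => ?_⟩
    · have := h i.castSucc j.castSucc (by simpa [Fin.castSucc_lt_castSucc_iff])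
      simpa [Fin.snoc_castSucc] using this
    · have := h i.castSucc (Fin.last k) (Fin.castSucc_lt_last i)
      simpa [Fin.snoc_castSucc, Fin.snoc_last] using this
  · rintro ⟨h1, h2⟩ i j hij
    induction j using Fin.lastCases with
    | last =>
      have hi : i ≠ Fin.last k := Fin.ne_of_lt hij
      obtain ⟨i', rfl⟩ := Fin.exists_castSucc_eq.2 hi
      simpa [Fin.snoc_castSucc, Fin.snoc_last] using h2 i'
    | cast j' =>
      have hi : i ≠ Fin.last k := by
        intro h; rw [h] at hij
        exact absurd (hij.trans (Fin.castSucc_lt_last j')) (lt_irrefl _)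
      obtain ⟨i', rfl⟩ := Fin.exists_castSucc_eq.2 hi
      have : i' < j' := by simpa [Fin.castSucc_lt_castSucc_iff] using hij
      simpa [Fin.snoc_castSucc] using h1 i' j' this

open scoped Classical in
lemma hc_fubini (d : ℕ) (ν : Measure (EuclideanSpace ℝ (Fin d))) [IsFiniteMeasure ν]
    (c : ℝ) (k : ℕ) :
    ∫ x : Fin (k+1) → EuclideanSpace ℝ (Fin d),
      (if ∀ i j : Fin (k+1), i < j → (inner ℝ (x i) (x j) : ℝ) ≤ c then (1 : ℝ) else 0)
      ∂(Measure.pi fun _ => ν)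
    = ∫ x : Fin k → EuclideanSpace ℝ (Fin d),
      (if ∀ i j : Fin k, i < j → (inner ℝ (x i) (x j) : ℝ) ≤ c then
        (ν {y | ∀ i : Fin k, (inner ℝ y (x i) : ℝ) ≤ c}).toReal else 0)
      ∂(Measure.pi fun _ => ν) := by
  set E := EuclideanSpace ℝ (Fin d)
  set F : (Fin (k+1) → E) → ℝ := fun x =>
    if ∀ i j : Fin (k+1), i < j → (inner ℝ (x i) (x j) : ℝ) ≤ c then (1 : ℝ) else 0 with hF
  set P : Measure (Fin (k+1) → E) := Measure.pi fun _ => ν with hP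
  set Q : Measure (Fin k → E) := Measure.pi fun _ => ν with hQ
  have hFint : Integrable F P := by
    have : F = Set.indicator {x : Fin (k+1) → E |
        ∀ i j : Fin (k+1), i < j → (inner ℝ (x i) (x j) : ℝ) ≤ c} (fun _ => (1:ℝ)) := by
      funext x
      by_cases h : ∀ i j : Fin (k+1), i < j → (inner ℝ (x i) (x j) : ℝ) ≤ c <;>
        simp [hF, Set.indicator_apply, Set.mem_setOf_eq, h]
    rw [this]
    exact (integrable_const (1:ℝ)).indicator (hc_compat_closed d (k+1) c).measurableSet
  let e := MeasurableEquiv.piFinSuccAbove (fun _ : Fin (k+1) => E) (Fin.last k)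
  have hmp := measurePreserving_piFinSuccAbove (fun _ : Fin (k+1) => ν) (Fin.last k)
  set G : E × (Fin k → E) → ℝ := fun p => F (e.symm p) with hG
  have hGe : (fun x => G (e x)) = F := by
    funext x; simp [hG, MeasurableEquiv.symm_apply_apply]
  have hGint : Integrable G (ν.prod (Measure.pi fun _ => ν)) := by
    rw [← hmp.map_eq, integrable_map_equiv e]
    have : G ∘ e = F := by funext z; simp [hG, Function.comp]
    rw [this]; exact hFint
  have h1 : ∫ x, F x ∂P = ∫ p, G p ∂(ν.prod (Measure.pi fun _ => ν)) := by
    rw [← hmp.map_eq, integral_map_equiv e]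
    exact (congrArg (fun f => ∫ x, f x ∂P) hGe).symm
  rw [h1, integral_prod_symm G hGint]
  refine integral_congr_ae (Filter.Eventually.of_forall fun x => ?_)
  show (∫ y : E, G (y, x) ∂ν)
      = if ∀ i j : Fin k, i < j → (inner ℝ (x i) (x j) : ℝ) ≤ c then
          (ν {y | ∀ i : Fin k, (inner ℝ y (x i) : ℝ) ≤ c}).toReal else 0
  have hsymm : ∀ y : E, e.symm (y, x) = Fin.snoc x y := by
    intro y
    simp only [e, MeasurableEquiv.piFinSuccAbove_symm_apply]
    exact Fin.insertNth_last' y x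
  by_cases hx : ∀ i j : Fin k, i < j → (inner ℝ (x i) (x j) : ℝ) ≤ c
  · have hset : {y : E | ∀ i : Fin k, (inner ℝ (x i) y : ℝ) ≤ c}
        = {y : E | ∀ i : Fin k, (inner ℝ y (x i) : ℝ) ≤ c} := by
      ext y; simp [real_inner_comm]
    have hcl : IsClosed {y : E | ∀ i : Fin k, (inner ℝ (x i) y : ℝ) ≤ c} := by
      have : {y : E | ∀ i : Fin k, (inner ℝ (x i) y : ℝ) ≤ c}
          = ⋂ i : Fin k, {y | (inner ℝ (x i) y : ℝ) ≤ c} := by ext y; simp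
      rw [this]
      exact isClosed_iInter fun i =>
        isClosed_le (Continuous.inner continuous_const continuous_id) continuous_const
    have : (fun y => G (y, x))
        = Set.indicator {y : E | ∀ i : Fin k, (inner ℝ (x i) y : ℝ) ≤ c} (fun _ => (1:ℝ)) := by
      funext y
      have hcond := hc_snoc_cond (E := E) c x y
      simp only [hG, hF, hsymm y, Set.indicator_apply, Set.mem_setOf_eq]
      by_cases hy : ∀ i : Fin k, (inner ℝ (x i) y : ℝ) ≤ c
      · rw [if_pos (hcond.2 ⟨hx, hy⟩), if_pos hy]
      · rw [if_neg (fun h => hy (hcond.1 h).2), if_neg hy]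
    rw [this, integral_indicator hcl.measurableSet, setIntegral_const, hset,
      if_pos hx, smul_eq_mul, mul_one]
    rfl
  · have : (fun y => G (y, x)) = fun _ => (0:ℝ) := by
      funext y
      have hcond := hc_snoc_cond (E := E) c x y
      simp only [hG, hF, hsymm y]
      exact if_neg (fun h => hx (hcond.1 h).1)
    rw [this, integral_const, if_neg hx, smul_zero]

open scoped Classical in
lemma hc_key (d : ℕ) (μ : Measure (EuclideanSpace ℝ (Fin d))) [IsFiniteMeasure μ]
    (A : Set (EuclideanSpace ℝ (Fin d))) (θ : ℝ) (k : ℕ) :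
    (1 / k.factorial : ℝ) *
      ∫ x : Fin k → EuclideanSpace ℝ (Fin d),
        (if ∀ i j : Fin k, i < j → (inner ℝ (x i) (x j) : ℝ) ≤ Real.cos θ then
          ((μ.restrict A) {y | ∀ i : Fin k, (inner ℝ y (x i) : ℝ) ≤ Real.cos θ}).toReal
        else 0)
        ∂(Measure.pi fun _ => μ.restrict A)
    = ((k : ℝ) + 1) * hardCapZhat d μ A θ (k + 1) := by
  rw [← hc_fubini d (μ.restrict A) (Real.cos θ) k, hardCapZhat]
  have hf : (((k + 1).factorial : ℕ) : ℝ) = ((k : ℝ) + 1) * (k.factorial : ℝ) := by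
    rw [Nat.factorial_succ]; push_cast; ring
  rw [hf]
  have h1 : ((k.factorial : ℕ) : ℝ) ≠ 0 := Nat.cast_ne_zero.2 k.factorial_ne_zero
  have h2 : ((k : ℝ) + 1) ≠ 0 := by positivity
  field_simp

/-- `α_A^θ(λ) = λ · F_A^θ(λ)`. -/
theorem hardCapAlpha_eq_lam_mul_freeArea (d : ℕ) (θ : ℝ) (hθ : θ ∈ Set.Ioo 0 (π / 2))
    (μ : Measure (EuclideanSpace ℝ (Fin d))) [IsFiniteMeasure μ]
    (S : Set (EuclideanSpace ℝ (Fin d))) (hS : S = Metric.sphere 0 1)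
    (hprob : μ S = 1)
    (A : Set (EuclideanSpace ℝ (Fin d))) (hA : MeasurableSet A) (hAS : A ⊆ S)
    (hApos : 0 < μ A) (lam : ℝ) (hlam : 0 < lam) :
    hardCapAlpha d μ A θ lam = lam * hardCapFreeArea d μ A θ lam := by
  rw [hardCapAlpha, hardCapFreeArea]
  have hderiv : deriv (hardCapZ d μ A θ) lam
      = ∑' k : ℕ, (k : ℝ) * lam ^ (k - 1) * hardCapZhat d μ A θ k :=
    (hc_hasDerivAt d μ A θ lam).deriv
  have hsum := hc_deriv_summable d μ A θ lam
  have hshift : (∑' k : ℕ, (k : ℝ) * lam ^ (k - 1) * hardCapZhat d μ A θ k)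
      = ∑' k : ℕ, lam ^ k * (((k : ℝ) + 1) * hardCapZhat d μ A θ (k + 1)) := by
    rw [hsum.tsum_eq_zero_add]
    simp only [Nat.cast_zero, zero_mul, zero_add]
    refine tsum_congr fun k => ?_
    rw [Nat.add_sub_cancel]
    push_cast
    ring
  have hT : (∑' k : ℕ, lam ^ k * ((1 / k.factorial : ℝ) *
      ∫ x : Fin k → EuclideanSpace ℝ (Fin d),
        (if ∀ i j : Fin k, i < j → (inner ℝ (x i) (x j) : ℝ) ≤ Real.cos θ then
          ((μ.restrict A) {y | ∀ i : Fin k, (inner ℝ y (x i) : ℝ) ≤ Real.cos θ}).toReal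
        else 0)
        ∂(Measure.pi fun _ => μ.restrict A)))
      = ∑' k : ℕ, lam ^ k * (((k : ℝ) + 1) * hardCapZhat d μ A θ (k + 1)) :=
    tsum_congr fun k => by rw [hc_key d μ A θ k]
  rw [hderiv, hshift, hT]
  ring
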